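/- Fix p ≥ 1. For every compact set K ⊆ (0,∞)^p × ℝ^p there exist constants c_K, d_K ∈ (0,∞) such that for every (a,b) ∈ K, letting J be the two-sided p-periodic Jacobi operator obtained by extending (a,b) periodically, and for every α = (α_0, …, α_p) ∈ ℝ^{p+1}: c_K · N(α, J) ≤ (Σ_{ℓ=0}^{p} α_ℓ²)^{1/2} ≤ d_K · N(α, J), where N(α, J) := ( Σ_{j=1}^{p+1} ‖(Σ_{ℓ=0}^{p} α_ℓ J^ℓ) δ_j‖² )^{1/2} is the Hilbert–Schmidt norm of (Σ_ℓ α_ℓ J^ℓ) χ_{p+1}, with χ_{p+1} the orthogonal projection onto the span of δ_1, …, δ_{p+1}. -/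

import Mathlib

open scoped ComplexConjugate

noncomputable section

/-- The two-sided Hilbert space `ℓ²(ℤ)`. -/
abbrev HZ : Type := lp (fun _ : ℤ => ℂ) 2

/-- The standard basis vectors. -/
def deltaZ (k : ℤ) : HZ := lp.single 2 k 1

/-- Periodic extension: `(pext v)_n = v_{(n−1) mod p}`. -/
def pext {p : ℕ} (v : Fin p → ℝ) : ℤ → ℝ := fun n =>
  if h : 0 < p then
    v ⟨((n - 1) % (p : ℤ)).toNat, by
      have hp' : (0 : ℤ) < (p : ℤ) := by exact_mod_cast h
      have h1 : 0 ≤ (n - 1) % (p : ℤ) := Int.emod_nonneg _ (ne_of_gt hp')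
      have h2 : (n - 1) % (p : ℤ) < (p : ℤ) := Int.emod_lt_of_pos _ hp'
      omega⟩
  else 0

/-- `N(α, J)`: the Hilbert–Schmidt norm of `(Σ_ℓ α_ℓ J^ℓ) χ_{p+1}`, i.e.
`(Σ_{j=1}^{p+1} ‖(Σ_ℓ α_ℓ J^ℓ) δ_j‖²)^{1/2}`. -/
def opN (p : ℕ) (J : HZ →L[ℂ] HZ) (α : Fin (p + 1) → ℝ) : ℝ :=
  Real.sqrt (∑ j ∈ Finset.range (p + 1),
    ‖(∑ l : Fin (p + 1), (α l : ℂ) • J ^ (l : ℕ)) (deltaZ ((j : ℤ) + 1))‖ ^ 2)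

/-! ### Auxiliary machinery -/

lemma pext_pos {p : ℕ} (hp : 0 < p) (v : Fin p → ℝ) (hv : ∀ i, 0 < v i) (m : ℤ) :
    0 < pext v m := by
  unfold pext; rw [dif_pos hp]; exact hv _

lemma pext_continuous {p : ℕ} (hp : 0 < p) (m : ℤ) :
    Continuous fun vw : (Fin p → ℝ) × (Fin p → ℝ) => pext vw.1 m := by
  unfold pext
  simp only [dif_pos hp]
  exact (continuous_apply _).comp continuous_fst

lemma pext_continuous' {p : ℕ} (hp : 0 < p) (m : ℤ) :
    Continuous fun vw : (Fin p → ℝ) × (Fin p → ℝ) => pext vw.2 m := by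
  unfold pext
  simp only [dif_pos hp]
  exact (continuous_apply _).comp continuous_snd

/-- matrix entries of `J^l`: `coefff p vw j l n = (J^l δ_j)_n`. -/
def coefff (p : ℕ) (vw : (Fin p → ℝ) × (Fin p → ℝ)) (j : ℤ) : ℕ → ℤ → ℝ
  | 0 => fun n => if n = j then 1 else 0
  | (l+1) => fun n => pext vw.1 (n-1) * coefff p vw j l (n-1)
      + pext vw.2 n * coefff p vw j l n + pext vw.1 n * coefff p vw j l (n+1)

lemma coefff_support (p : ℕ) (vw : (Fin p → ℝ) × (Fin p → ℝ)) (j : ℤ) :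
    ∀ (l : ℕ) (n : ℤ), (n < j - l ∨ j + l < n) → coefff p vw j l n = 0 := by
  intro l
  induction l with
  | zero =>
    intro n hn
    simp only [coefff]
    rw [if_neg]; omega
  | succ l ih =>
    intro n hn
    push_cast at hn
    simp only [coefff]
    rw [ih (n-1) (by omega), ih n (by omega), ih (n+1) (by omega)]
    ring

lemma coefff_lead (p : ℕ) (vw : (Fin p → ℝ) × (Fin p → ℝ)) (j : ℤ) :
    ∀ l : ℕ, coefff p vw j l (j + l) = ∏ i ∈ Finset.range l, pext vw.1 (j + i) := by
  intro l
  induction l with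
  | zero => simp [coefff]
  | succ l ih =>
    simp only [coefff]
    have h1 : (j + ((l:ℤ)+1)) - 1 = j + l := by ring
    push_cast
    rw [h1]
    rw [coefff_support p vw j l (j + ((l:ℤ)+1)) (by omega),
        coefff_support p vw j l (j + ((l:ℤ)+1) + 1) (by omega), ih]
    rw [Finset.prod_range_succ]
    ring

lemma coefff_continuous (p : ℕ) (hp : 0 < p) (j : ℤ) :
    ∀ (l : ℕ) (n : ℤ),
      Continuous fun vw : (Fin p → ℝ) × (Fin p → ℝ) => coefff p vw j l n := by
  intro l
  induction l with
  | zero => intro n; simp only [coefff]; exact continuous_const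
  | succ l ih =>
    intro n
    simp only [coefff]
    exact (((pext_continuous hp _).mul (ih _)).add
      ((pext_continuous' hp _).mul (ih _))).add ((pext_continuous hp _).mul (ih _))

lemma deltaZ_apply (j n : ℤ) : (deltaZ j) n = if n = j then 1 else 0 := by
  unfold deltaZ
  rcases eq_or_ne n j with h | h
  · subst h; rw [lp.single_apply_self, if_pos rfl]
  · rw [lp.single_apply_ne _ _ _ h, if_neg h]

lemma coord (p : ℕ) (vw : (Fin p → ℝ) × (Fin p → ℝ)) (J : HZ →L[ℂ] HZ)
    (hJ : ∀ (u : HZ) (n : ℤ),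
      (J u) n = (pext vw.1 (n - 1) : ℂ) * u (n - 1) + (pext vw.2 n : ℂ) * u n
        + (pext vw.1 n : ℂ) * u (n + 1)) (j : ℤ) :
    ∀ (l : ℕ) (n : ℤ), ((J ^ l) (deltaZ j)) n = (coefff p vw j l n : ℂ) := by
  intro l
  induction l with
  | zero =>
    intro n
    rw [pow_zero, ContinuousLinearMap.one_apply, deltaZ_apply]
    simp only [coefff]
    split <;> simp
  | succ l ih =>
    intro n
    rw [pow_succ', ContinuousLinearMap.mul_apply, hJ, ih, ih, ih]
    simp only [coefff]
    push_cast
    ring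

lemma coordP (p : ℕ) (vw : (Fin p → ℝ) × (Fin p → ℝ)) (J : HZ →L[ℂ] HZ)
    (hJ : ∀ (u : HZ) (n : ℤ),
      (J u) n = (pext vw.1 (n - 1) : ℂ) * u (n - 1) + (pext vw.2 n : ℂ) * u n
        + (pext vw.1 n : ℂ) * u (n + 1)) (j : ℤ) (α : Fin (p+1) → ℝ) (n : ℤ) :
    ((∑ l : Fin (p + 1), (α l : ℂ) • J ^ (l : ℕ)) (deltaZ j)) n
      = ((∑ l : Fin (p + 1), α l * coefff p vw j (l : ℕ) n : ℝ) : ℂ) := by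
  rw [ContinuousLinearMap.sum_apply, lp.coeFn_sum, Finset.sum_apply]
  push_cast
  refine Finset.sum_congr rfl fun l _ => ?_
  have hc := coord p vw J hJ j l n
  rw [Pi.smul_apply, lp.coeFn_smul, Pi.smul_apply, smul_eq_mul, ← hc]
  simp [ContinuousLinearMap.coe_pow]

lemma norm_sq_eq (u : HZ) (s : Finset ℤ) (hs : ∀ n ∉ s, u n = 0) :
    ‖u‖ ^ 2 = ∑ n ∈ s, ‖u n‖ ^ 2 := by
  have h := lp.norm_rpow_eq_tsum (p := 2) (by norm_num) u
  simp only [ENNReal.toReal_ofNat] at h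
  have h2 : ∀ x : ℝ, x ^ (2:ℝ) = x ^ (2:ℕ) := by
    intro x; rw [show (2:ℝ) = ((2:ℕ):ℝ) by norm_num, Real.rpow_natCast]
  rw [h2] at h
  simp only [h2] at h
  rw [h]
  exact tsum_eq_sum (by intro n hn; rw [hs n hn]; simp)

/-- The concrete finite expression for `opN ^ 2`. -/
def Fq (p : ℕ) (vw : (Fin p → ℝ) × (Fin p → ℝ)) (α : Fin (p + 1) → ℝ) : ℝ :=
  ∑ j ∈ Finset.range (p + 1), ∑ n ∈ Finset.Icc ((j : ℤ) + 1 - p) ((j : ℤ) + 1 + p),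
    (∑ l : Fin (p + 1), α l * coefff p vw ((j : ℤ) + 1) (l : ℕ) n) ^ 2

lemma opN_eq (p : ℕ) (vw : (Fin p → ℝ) × (Fin p → ℝ)) (J : HZ →L[ℂ] HZ)
    (hJ : ∀ (u : HZ) (n : ℤ),
      (J u) n = (pext vw.1 (n - 1) : ℂ) * u (n - 1) + (pext vw.2 n : ℂ) * u n
        + (pext vw.1 n : ℂ) * u (n + 1)) (α : Fin (p+1) → ℝ) :
    opN p J α = Real.sqrt (Fq p vw α) := by
  unfold opN Fq
  congr 1
  refine Finset.sum_congr rfl fun j _ => ?_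
  have hsupp : ∀ n ∉ Finset.Icc ((j:ℤ)+1-p) ((j:ℤ)+1+p),
      ((∑ l : Fin (p + 1), (α l : ℂ) • J ^ (l : ℕ)) (deltaZ ((j:ℤ)+1))) n = 0 := by
    intro n hn
    rw [Finset.mem_Icc, not_and_or, not_le, not_le] at hn
    rw [coordP p vw J hJ, Complex.ofReal_eq_zero]
    apply Finset.sum_eq_zero
    intro l _
    have hl : (l : ℕ) ≤ p := Nat.lt_succ_iff.mp l.isLt
    have hl' : ((l : ℕ) : ℤ) ≤ (p : ℤ) := by exact_mod_cast hl
    rw [coefff_support p vw ((j:ℤ)+1) l n (by omega), mul_zero]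
  rw [norm_sq_eq _ _ hsupp]
  refine Finset.sum_congr rfl fun n _ => ?_
  rw [coordP p vw J hJ, Complex.norm_real, Real.norm_eq_abs, sq_abs]

lemma Fq_smul (p : ℕ) (vw : (Fin p → ℝ) × (Fin p → ℝ)) (t : ℝ) (α : Fin (p+1) → ℝ) :
    Fq p vw (t • α) = t ^ 2 * Fq p vw α := by
  unfold Fq
  rw [Finset.mul_sum]
  refine Finset.sum_congr rfl fun j _ => ?_
  rw [Finset.mul_sum]
  refine Finset.sum_congr rfl fun n _ => ?_
  have h : ∑ l : Fin (p+1), (t • α) l * coefff p vw ((j:ℤ)+1) (l:ℕ) n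
      = t * ∑ l : Fin (p+1), α l * coefff p vw ((j:ℤ)+1) (l:ℕ) n := by
    rw [Finset.mul_sum]
    refine Finset.sum_congr rfl fun l _ => ?_
    simp [mul_assoc]
  rw [h, mul_pow]

lemma Fq_pos (p : ℕ) (hp : 0 < p) (vw : (Fin p → ℝ) × (Fin p → ℝ))
    (hv : ∀ i, 0 < vw.1 i) (α : Fin (p+1) → ℝ) (hα : α ≠ 0) :
    0 < Fq p vw α := by
  have hnonneg : 0 ≤ Fq p vw α :=
    Finset.sum_nonneg fun j _ => Finset.sum_nonneg fun n _ => sq_nonneg _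
  rcases hnonneg.lt_or_eq with h | h
  · exact h
  exfalso
  have h0 : ∀ j ∈ Finset.range (p+1),
      (∑ n ∈ Finset.Icc ((j : ℤ) + 1 - p) ((j : ℤ) + 1 + p),
        (∑ l : Fin (p + 1), α l * coefff p vw ((j : ℤ) + 1) (l : ℕ) n) ^ 2) = 0 :=
    (Finset.sum_eq_zero_iff_of_nonneg
      (fun j _ => Finset.sum_nonneg fun n _ => sq_nonneg _)).mp h.symm
  have h1 := (Finset.sum_eq_zero_iff_of_nonneg (fun n _ => sq_nonneg _)).mp
    (h0 0 (Finset.mem_range.mpr (Nat.succ_pos p)))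
  have heq : ∀ n : ℤ, (0:ℤ) + 1 - p ≤ n → n ≤ (0:ℤ) + 1 + p →
      ∑ l : Fin (p + 1), α l * coefff p vw ((0:ℤ) + 1) (l : ℕ) n = 0 := by
    intro n h1' h2'
    have := h1 n (Finset.mem_Icc.mpr ⟨by exact_mod_cast h1', by exact_mod_cast h2'⟩)
    exact sq_eq_zero_iff.mp this
  have step : ∀ l : Fin (p+1), (∀ m : Fin (p+1), (l:ℕ) < (m:ℕ) → α m = 0) → α l = 0 := by
    intro l hm
    have hl : (l : ℕ) ≤ p := Nat.lt_succ_iff.mp l.isLt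
    have hl' : ((l : ℕ) : ℤ) ≤ (p : ℤ) := by exact_mod_cast hl
    have h1' := heq ((0:ℤ) + 1 + (l:ℕ)) (by omega) (by omega)
    have h2 : ∑ m : Fin (p+1), α m * coefff p vw ((0:ℤ)+1) (m:ℕ) ((0:ℤ) + 1 + (l:ℕ))
        = α l * coefff p vw ((0:ℤ)+1) (l:ℕ) ((0:ℤ) + 1 + (l:ℕ)) := by
      refine Finset.sum_eq_single l (fun m _ hne => ?_) (by simp)
      rcases lt_or_gt_of_ne (fun hh : (m:ℕ) = (l:ℕ) => hne (Fin.ext hh)) with hlt | hgt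
      · rw [coefff_support p vw ((0:ℤ)+1) (m:ℕ) _ (by right; push_cast; omega), mul_zero]
      · rw [hm m hgt, zero_mul]
    rw [h2, coefff_lead p vw ((0:ℤ)+1) (l:ℕ)] at h1'
    have hpos : 0 < ∏ i ∈ Finset.range (l:ℕ), pext vw.1 ((0:ℤ)+1 + i) :=
      Finset.prod_pos fun i _ => pext_pos hp vw.1 hv _
    rcases mul_eq_zero.mp h1' with h' | h'
    · exact h'
    · exact absurd h' (ne_of_gt hpos)
  have key : ∀ k : ℕ, ∀ l : Fin (p+1), p - (l:ℕ) ≤ k → α l = 0 := by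
    intro k
    induction k with
    | zero =>
      intro l hl
      exact step l (fun m hlt => absurd hlt (by have := Nat.lt_succ_iff.mp m.isLt; omega))
    | succ k ih =>
      intro l hl
      exact step l (fun m hlt => ih m (by omega))
  exact hα (funext fun l => key p l (by omega))

/-- on a compact set of periodic Jacobi parameters, the Euclidean
norm of `(α_0,…,α_p)` is uniformly comparable to the Hilbert–Schmidt norm of
`(Σ_ℓ α_ℓ J^ℓ) χ_{p+1}`. -/
theorem statement13 (p : ℕ) (hp : 1 ≤ p)
    (K : Set ((Fin p → ℝ) × (Fin p → ℝ))) (hKc : IsCompact K)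
    (hKpos : ∀ vw ∈ K, ∀ j, 0 < vw.1 j) :
    ∃ c d : ℝ, 0 < c ∧ 0 < d ∧
      ∀ vw ∈ K, ∀ J : HZ →L[ℂ] HZ,
        (∀ (u : HZ) (n : ℤ),
          (J u) n = (pext vw.1 (n - 1) : ℂ) * u (n - 1) + (pext vw.2 n : ℂ) * u n
            + (pext vw.1 n : ℂ) * u (n + 1)) →
        ∀ α : Fin (p + 1) → ℝ,
          c * opN p J α ≤ Real.sqrt (∑ l : Fin (p + 1), (α l) ^ 2) ∧
          Real.sqrt (∑ l : Fin (p + 1), (α l) ^ 2) ≤ d * opN p J α := by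
  rcases Set.eq_empty_or_nonempty K with hKe | hKne
  · exact ⟨1, 1, one_pos, one_pos, fun vw hvw => by
      rw [hKe] at hvw; exact absurd hvw (Set.notMem_empty _)⟩
  have hp0 : 0 < p := hp
  set X := ((Fin p → ℝ) × (Fin p → ℝ)) × (Fin (p+1) → ℝ) with hX
  set g1 : X → ℝ := fun x => Fq p x.1 x.2 with hg1_def
  set g2 : X → ℝ := fun x => ∑ l : Fin (p+1), (x.2 l) ^ 2 with hg2_def
  have hg1 : Continuous g1 := by
    unfold g1
    unfold Fq
    refine continuous_finset_sum _ fun j _ => continuous_finset_sum _ fun n _ => ?_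
    have h1 : ∀ l : Fin (p+1),
        Continuous fun x : X => x.2 l * coefff p x.1 ((j:ℤ)+1) (l:ℕ) n := fun l =>
      ((continuous_apply l).comp continuous_snd).mul
        ((coefff_continuous p hp0 ((j:ℤ)+1) (l:ℕ) n).comp continuous_fst)
    exact (continuous_finset_sum _ fun l _ => h1 l).pow 2
  have hg2 : Continuous g2 := by
    unfold g2
    exact continuous_finset_sum _ fun l _ =>
      ((continuous_apply l).comp continuous_snd).pow 2
  set S : Set X := K ×ˢ Metric.sphere 0 1 with hS_def
  have hScomp : IsCompact S := hKc.prod (isCompact_sphere 0 1)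
  have hSne : S.Nonempty := hKne.prod (NormedSpace.sphere_nonempty.mpr zero_le_one)
  obtain ⟨z1, hz1, hmin1'⟩ := hScomp.exists_isMinOn hSne hg1.continuousOn
  obtain ⟨z2, hz2, hmax1'⟩ := hScomp.exists_isMaxOn hSne hg1.continuousOn
  obtain ⟨z3, hz3, hmin2'⟩ := hScomp.exists_isMinOn hSne hg2.continuousOn
  obtain ⟨z4, hz4, hmax2'⟩ := hScomp.exists_isMaxOn hSne hg2.continuousOn
  have hmin1 := isMinOn_iff.mp hmin1'
  have hmax1 := isMaxOn_iff.mp hmax1'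
  have hmin2 := isMinOn_iff.mp hmin2'
  have hmax2 := isMaxOn_iff.mp hmax2'
  have hsphere_ne : ∀ z : X, z ∈ S → z.2 ≠ 0 := by
    intro z hz h0
    have h1 : ‖z.2‖ = 1 := mem_sphere_zero_iff_norm.mp hz.2
    rw [h0, norm_zero] at h1; norm_num at h1
  have hm1pos : 0 < g1 z1 :=
    Fq_pos p hp0 z1.1 (fun i => hKpos z1.1 hz1.1 i) z1.2 (hsphere_ne z1 hz1)
  have hm2pos : 0 < g2 z3 := by
    have hne := hsphere_ne z3 hz3
    have : ∃ l, z3.2 l ≠ 0 := by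
      by_contra h; push_neg at h; exact hne (funext h)
    obtain ⟨l, hl⟩ := this
    exact Finset.sum_pos' (fun i _ => sq_nonneg _) ⟨l, Finset.mem_univ l, by positivity⟩
  have hM1pos : 0 < g1 z2 := lt_of_lt_of_le hm1pos (hmin1 z2 hz2)
  have hM2pos : 0 < g2 z4 := lt_of_lt_of_le hm2pos (hmin2 z4 hz4)
  have hsm1 : 0 < Real.sqrt (g1 z1) := Real.sqrt_pos.mpr hm1pos
  have hsM1 : 0 < Real.sqrt (g1 z2) := Real.sqrt_pos.mpr hM1pos
  have hsm2 : 0 < Real.sqrt (g2 z3) := Real.sqrt_pos.mpr hm2pos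
  have hsM2 : 0 < Real.sqrt (g2 z4) := Real.sqrt_pos.mpr hM2pos
  refine ⟨Real.sqrt (g2 z3) / Real.sqrt (g1 z2),
    Real.sqrt (g2 z4) / Real.sqrt (g1 z1), by positivity, by positivity, ?_⟩
  intro vw hvw J hJ α
  have hOP : opN p J α = Real.sqrt (Fq p vw α) := opN_eq p vw J hJ α
  rcases eq_or_ne α 0 with rfl | hα
  · have h0 : Fq p vw 0 = 0 := by simp [Fq]
    rw [hOP, h0, Real.sqrt_zero]
    norm_num
  · set t : ℝ := ‖α‖ with ht
    have htpos : 0 < t := norm_pos_iff.mpr hα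
    set β : Fin (p+1) → ℝ := t⁻¹ • α with hβ
    have hβnorm : ‖β‖ = 1 := by
      rw [hβ, norm_smul, Real.norm_eq_abs, abs_inv, abs_of_pos htpos, ← ht,
        inv_mul_cancel₀ htpos.ne']
    have hβS : ((vw, β) : X) ∈ S :=
      Set.mem_prod.mpr ⟨hvw, mem_sphere_zero_iff_norm.mpr hβnorm⟩
    have htβ : t • β = α := by
      rw [hβ, smul_smul, mul_inv_cancel₀ htpos.ne', one_smul]
    -- bounds for Fq
    have e1 : g1 ((vw, β) : X) = Fq p vw β := by rw [hg1_def]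
    have e2 : g2 ((vw, β) : X) = ∑ l : Fin (p+1), (β l) ^ 2 := by rw [hg2_def]
    have hFlo : g1 z1 ≤ Fq p vw β := e1 ▸ hmin1 _ hβS
    have hFhi : Fq p vw β ≤ g1 z2 := e1 ▸ hmax1 _ hβS
    have hGlo : g2 z3 ≤ ∑ l : Fin (p+1), (β l) ^ 2 := e2 ▸ hmin2 _ hβS
    have hGhi : (∑ l : Fin (p+1), (β l) ^ 2) ≤ g2 z4 := e2 ▸ hmax2 _ hβS
    have hFqα : Fq p vw α = t ^ 2 * Fq p vw β := by
      rw [← htβ, Fq_smul]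
    have hops : opN p J α = t * Real.sqrt (Fq p vw β) := by
      rw [hOP, hFqα, Real.sqrt_mul (sq_nonneg t), Real.sqrt_sq htpos.le]
    have hsum : ∑ l : Fin (p+1), (α l) ^ 2 = t ^ 2 * ∑ l : Fin (p+1), (β l) ^ 2 := by
      rw [Finset.mul_sum]
      refine Finset.sum_congr rfl fun l _ => ?_
      rw [← htβ]
      simp [mul_pow]
    have hsqs : Real.sqrt (∑ l : Fin (p+1), (α l) ^ 2)
        = t * Real.sqrt (∑ l : Fin (p+1), (β l) ^ 2) := by
      rw [hsum, Real.sqrt_mul (sq_nonneg t), Real.sqrt_sq htpos.le]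
    have hsF1 : Real.sqrt (Fq p vw β) ≤ Real.sqrt (g1 z2) := Real.sqrt_le_sqrt hFhi
    have hsF2 : Real.sqrt (g1 z1) ≤ Real.sqrt (Fq p vw β) := Real.sqrt_le_sqrt hFlo
    have hsG1 : Real.sqrt (g2 z3) ≤ Real.sqrt (∑ l : Fin (p+1), (β l) ^ 2) :=
      Real.sqrt_le_sqrt hGlo
    have hsG2 : Real.sqrt (∑ l : Fin (p+1), (β l) ^ 2) ≤ Real.sqrt (g2 z4) :=
      Real.sqrt_le_sqrt hGhi
    constructor
    · rw [hops, hsqs]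
      calc Real.sqrt (g2 z3) / Real.sqrt (g1 z2) * (t * Real.sqrt (Fq p vw β))
          ≤ Real.sqrt (g2 z3) / Real.sqrt (g1 z2) * (t * Real.sqrt (g1 z2)) := by
            apply mul_le_mul_of_nonneg_left (mul_le_mul_of_nonneg_left hsF1 htpos.le)
            positivity
        _ = t * Real.sqrt (g2 z3) := by
            field_simp
        _ ≤ t * Real.sqrt (∑ l : Fin (p+1), (β l) ^ 2) :=
            mul_le_mul_of_nonneg_left hsG1 htpos.le
    · rw [hops, hsqs]
      calc t * Real.sqrt (∑ l : Fin (p+1), (β l) ^ 2)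
          ≤ t * Real.sqrt (g2 z4) := mul_le_mul_of_nonneg_left hsG2 htpos.le
        _ = Real.sqrt (g2 z4) / Real.sqrt (g1 z1) * (t * Real.sqrt (g1 z1)) := by
            field_simp
        _ ≤ Real.sqrt (g2 z4) / Real.sqrt (g1 z1) * (t * Real.sqrt (Fq p vw β)) := by
            apply mul_le_mul_of_nonneg_left (mul_le_mul_of_nonneg_left hsF2 htpos.le)
            positivity
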